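/- Let K be a closed convex cone in E, x̄ feasible (g(x̄) ∈ K), and suppose Robinson's constraint qualification holds: 0 ∈ int(Im(Dg(x̄)) + K − g(x̄)). If sequences x^k → x̄, μ^k ∈ K° satisfy ∇f(x^k) + Dg(x^k)*[μ^k] → 0 and ⟨μ^k, Π_K(g(x^k))⟩ → 0, then {μ^k} is bounded. -/

import Mathlib

set_option maxHeartbeats 1000000


open Filter Topology
open scoped RealInnerProductSpace

/-- `p` is the orthogonal (metric) projection of `z` onto `C`. -/
def IsProjection {E : Type*} [NormedAddCommGroup E] (C : Set E) (z p : E) : Prop :=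
  p ∈ C ∧ ∀ w ∈ C, ‖z - p‖ ≤ ‖z - w‖

/-- The polar cone of a set. -/
def polarCone {E : Type*} [NormedAddCommGroup E] [InnerProductSpace ℝ E] (C : Set E) : Set E :=
  {y | ∀ c ∈ C, ⟪y, c⟫ ≤ 0}

theorem stmt_15
    {n : ℕ} {E : Type*} [NormedAddCommGroup E] [InnerProductSpace ℝ E] [FiniteDimensional ℝ E]
    (f : EuclideanSpace ℝ (Fin n) → ℝ) (hf : ContDiff ℝ 1 f)
    (g : EuclideanSpace ℝ (Fin n) → E) (hg : ContDiff ℝ 1 g)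
    (K : Set E) (hKne : K.Nonempty) (hKcl : IsClosed K) (hKconv : Convex ℝ K)
    (hKcone : ∀ c : ℝ, 0 ≤ c → ∀ x ∈ K, c • x ∈ K)
    (PK : E → E) (hPK : ∀ z, IsProjection K z (PK z))
    (xbar : EuclideanSpace ℝ (Fin n)) (hfeas : g xbar ∈ K)
    -- Robinson's constraint qualification
    (hRobinson : (0 : E) ∈ interior
      {w : E | ∃ v : EuclideanSpace ℝ (Fin n), ∃ y ∈ K, w = fderiv ℝ g xbar v + y - g xbar})
    (xk : ℕ → EuclideanSpace ℝ (Fin n)) (hxk : Tendsto xk atTop (𝓝 xbar))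
    (muk : ℕ → E) (hmuk : ∀ k, muk k ∈ polarCone K)
    (hstat : Tendsto (fun k =>
      gradient f (xk k) + (ContinuousLinearMap.adjoint (fderiv ℝ g (xk k))) (muk k))
      atTop (𝓝 0))
    (hcomp : Tendsto (fun k => ⟪muk k, PK (g (xk k))⟫) atTop (𝓝 0)) :
    ∃ M : ℝ, ∀ k, ‖muk k‖ ≤ M := by
  by_contra hcon
  push_neg at hcon
  -- extract a subsequence with ‖muk (φ m)‖ > m
  have hfreq : ∀ m : ℕ, ∃ᶠ k in atTop, (m : ℝ) < ‖muk k‖ := by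
    intro m
    rw [Filter.frequently_atTop]
    intro N
    obtain ⟨k, hk⟩ := hcon ((m : ℝ) + ∑ i ∈ Finset.range N, ‖muk i‖)
    have hsum : (0:ℝ) ≤ ∑ i ∈ Finset.range N, ‖muk i‖ :=
      Finset.sum_nonneg fun i _ => norm_nonneg _
    refine ⟨k, ?_, ?_⟩
    · by_contra hkN
      push_neg at hkN
      have h1 : ‖muk k‖ ≤ ∑ i ∈ Finset.range N, ‖muk i‖ :=
        Finset.single_le_sum (f := fun i => ‖muk i‖) (fun i _ => norm_nonneg _)
          (Finset.mem_range.2 hkN)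
      have h2 : (0:ℝ) ≤ (m:ℝ) := Nat.cast_nonneg m
      linarith
    · linarith
  obtain ⟨φ, hφmono, hφ⟩ := Filter.extraction_forall_of_frequently hfreq
  have hpos : ∀ m, 0 < ‖muk (φ m)‖ := fun m =>
    lt_of_le_of_lt (Nat.cast_nonneg m) (hφ m)
  set ν : ℕ → E := fun m => ‖muk (φ m)‖⁻¹ • muk (φ m) with hν
  have hνmem : ∀ m, ν m ∈ Metric.sphere (0:E) 1 := by
    intro m
    rw [mem_sphere_zero_iff_norm, hν]
    simp only [norm_smul, norm_inv, norm_norm]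
    exact inv_mul_cancel₀ (hpos m).ne'
  obtain ⟨μt, hμtmem, ψ, hψmono, hψlim⟩ :=
    (isCompact_sphere (0:E) 1).tendsto_subseq hνmem
  have hμtnorm : ‖μt‖ = 1 := mem_sphere_zero_iff_norm.1 hμtmem
  set σ : ℕ → ℕ := φ ∘ ψ with hσdef
  set c : ℕ → ℝ := fun m => ‖muk (σ m)‖ with hc
  have hcpos : ∀ m, 0 < c m := fun m => hpos (ψ m)
  have hσ : Tendsto σ atTop atTop := (hφmono.comp hψmono).tendsto_atTop
  have hctop : Tendsto c atTop atTop := by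
    refine tendsto_atTop_mono (fun m => ?_) tendsto_natCast_atTop_atTop
    calc (m:ℝ) ≤ (ψ m : ℝ) := by exact_mod_cast hψmono.id_le m
      _ ≤ ‖muk (φ (ψ m))‖ := (hφ (ψ m)).le
  have hcinv : Tendsto (fun m => (c m)⁻¹) atTop (𝓝 0) := hctop.inv_tendsto_atTop
  have hx' : Tendsto (fun m => xk (σ m)) atTop (𝓝 xbar) := hxk.comp hσ
  -- the normalized subsequence
  have hνψ : ∀ m, ν (ψ m) = (c m)⁻¹ • muk (σ m) := fun m => rfl
  have hνlim : Tendsto (fun m => (c m)⁻¹ • muk (σ m)) atTop (𝓝 μt) := hψlim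
  set A : EuclideanSpace ℝ (Fin n) →L[ℝ] E := fderiv ℝ g xbar with hA
  -- continuity of x ↦ adjoint (fderiv g x)
  have hDg : Continuous fun x => fderiv ℝ g x := hg.continuous_fderiv one_ne_zero
  have hadjcont : Continuous fun x : EuclideanSpace ℝ (Fin n) =>
      ContinuousLinearMap.adjoint (fderiv ℝ g x) :=
    (LinearIsometryEquiv.continuous _).comp hDg
  -- T_m (v_m) → adjoint A μt
  have hTv : Tendsto (fun m =>
      (ContinuousLinearMap.adjoint (fderiv ℝ g (xk (σ m)))) ((c m)⁻¹ • muk (σ m)))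
      atTop (𝓝 (ContinuousLinearMap.adjoint A μt)) := by
    have hT : Tendsto (fun m => ContinuousLinearMap.adjoint (fderiv ℝ g (xk (σ m))))
        atTop (𝓝 (ContinuousLinearMap.adjoint A)) := (hadjcont.tendsto _).comp hx'
    have := (isBoundedBilinearMap_apply (𝕜 := ℝ) (E := E)
      (F := EuclideanSpace ℝ (Fin n))).continuous.tendsto
      (ContinuousLinearMap.adjoint A, μt)
    exact this.comp (hT.prodMk_nhds hνlim)
  -- gradient term
  have hgradcont : Continuous fun x : EuclideanSpace ℝ (Fin n) => gradient f x := by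
    unfold gradient
    exact (InnerProductSpace.toDual ℝ _).symm.continuous.comp (hf.continuous_fderiv one_ne_zero)
  have hgradlim : Tendsto (fun m => (c m)⁻¹ • gradient f (xk (σ m))) atTop
      (𝓝 ((0:ℝ) • gradient f xbar)) :=
    hcinv.smul ((hgradcont.tendsto _).comp hx')
  have hstat' : Tendsto (fun m => (c m)⁻¹ •
      (gradient f (xk (σ m)) +
        (ContinuousLinearMap.adjoint (fderiv ℝ g (xk (σ m)))) (muk (σ m))))
      atTop (𝓝 ((0:ℝ) • (0 : EuclideanSpace ℝ (Fin n)))) :=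
    hcinv.smul (hstat.comp hσ)
  have hTv0 : Tendsto (fun m =>
      (ContinuousLinearMap.adjoint (fderiv ℝ g (xk (σ m)))) ((c m)⁻¹ • muk (σ m)))
      atTop (𝓝 0) := by
    have heq : ∀ m,
        (ContinuousLinearMap.adjoint (fderiv ℝ g (xk (σ m)))) ((c m)⁻¹ • muk (σ m)) =
        (c m)⁻¹ • (gradient f (xk (σ m)) +
          (ContinuousLinearMap.adjoint (fderiv ℝ g (xk (σ m)))) (muk (σ m))) -
        (c m)⁻¹ • gradient f (xk (σ m)) := by
      intro m
      rw [map_smul, smul_add]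
      abel
    simp only [heq]
    have := hstat'.sub hgradlim
    simpa using this
  have hadj0 : ContinuousLinearMap.adjoint A μt = 0 := tendsto_nhds_unique hTv hTv0
  -- μt ∈ polar cone of K
  have hμtpolar : ∀ y ∈ K, ⟪μt, y⟫ ≤ 0 := by
    intro y hy
    have hlim : Tendsto (fun m => ⟪(c m)⁻¹ • muk (σ m), y⟫) atTop (𝓝 ⟪μt, y⟫) :=
      hνlim.inner tendsto_const_nhds
    refine le_of_tendsto hlim (Eventually.of_forall fun m => ?_)
    rw [real_inner_smul_left]
    exact mul_nonpos_of_nonneg_of_nonpos (inv_nonneg.2 (hcpos m).le) (hmuk (σ m) y hy)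
  -- projection converges to g xbar
  have hPKlim : Tendsto (fun m => PK (g (xk (σ m)))) atTop (𝓝 (g xbar)) := by
    rw [tendsto_iff_norm_sub_tendsto_zero]
    have hglim : Tendsto (fun m => ‖g (xk (σ m)) - g xbar‖) atTop (𝓝 0) := by
      have : Tendsto (fun m => g (xk (σ m))) atTop (𝓝 (g xbar)) :=
        (hg.continuous.tendsto _).comp hx'
      rw [tendsto_iff_norm_sub_tendsto_zero] at this
      exact this
    refine squeeze_zero (fun m => norm_nonneg _) (fun m => ?_) (by simpa using hglim.const_mul 2)
    have h1 : ‖g (xk (σ m)) - PK (g (xk (σ m)))‖ ≤ ‖g (xk (σ m)) - g xbar‖ :=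
      (hPK (g (xk (σ m)))).2 (g xbar) hfeas
    calc ‖PK (g (xk (σ m))) - g xbar‖
        ≤ ‖PK (g (xk (σ m))) - g (xk (σ m))‖ + ‖g (xk (σ m)) - g xbar‖ :=
          norm_sub_le_norm_sub_add_norm_sub _ _ _
      _ ≤ 2 * ‖g (xk (σ m)) - g xbar‖ := by
          rw [norm_sub_rev] at h1; linarith
  -- ⟪μt, g xbar⟫ = 0
  have hortho : ⟪μt, g xbar⟫ = 0 := by
    have hlim1 : Tendsto (fun m => ⟪(c m)⁻¹ • muk (σ m), PK (g (xk (σ m)))⟫) atTop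
        (𝓝 ⟪μt, g xbar⟫) := hνlim.inner hPKlim
    have hlim2 : Tendsto (fun m => ⟪(c m)⁻¹ • muk (σ m), PK (g (xk (σ m)))⟫) atTop
        (𝓝 0) := by
      have : Tendsto (fun m => (c m)⁻¹ * ⟪muk (σ m), PK (g (xk (σ m)))⟫) atTop
          (𝓝 (0 * 0)) := hcinv.mul (hcomp.comp hσ)
      simpa [real_inner_smul_left] using this
    exact tendsto_nhds_unique hlim1 hlim2
  -- μt lies in the polar of the Robinson set, contradiction
  have hpolarH : ∀ w ∈ {w : E | ∃ v : EuclideanSpace ℝ (Fin n), ∃ y ∈ K,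
      w = fderiv ℝ g xbar v + y - g xbar}, ⟪μt, w⟫ ≤ 0 := by
    rintro w ⟨v, y, hy, rfl⟩
    have h1 : ⟪μt, A v⟫ = 0 := by
      rw [← ContinuousLinearMap.adjoint_inner_left, hadj0, inner_zero_left]
    have h2 : ⟪μt, y⟫ ≤ 0 := hμtpolar y hy
    rw [inner_sub_right, inner_add_right]
    rw [show fderiv ℝ g xbar = A from rfl, h1, hortho]
    linarith
  obtain ⟨ε, εpos, hball⟩ := Metric.mem_nhds_iff.1 (mem_interior_iff_mem_nhds.1 hRobinson)
  have hwmem : (ε/2) • μt ∈ Metric.ball (0:E) ε := by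
    rw [Metric.mem_ball, dist_zero_right, norm_smul, hμtnorm]
    rw [Real.norm_eq_abs, abs_of_pos (by linarith)]
    linarith
  have hle := hpolarH _ (hball hwmem)
  rw [real_inner_smul_right, real_inner_self_eq_norm_sq, hμtnorm] at hle
  nlinarith
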